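/- Let h : ℝ^d → ℝ be twice continuously differentiable with gradient ∇h and Hessian ∇²h. Let z₀ ∈ ℝ^d satisfy ∇h(z₀) = 0, and suppose A₀ := ∇²h(z₀) is symmetric positive definite. Let 0 ≤ k < 1 and let z ∈ ℝ^d be such that ‖I − A₀⁻¹ ∇²h(z')‖_op ≤ k for every point z' on the line segment from z₀ to z, where ‖·‖_op is the operator norm. If ‖∇h(z)‖ ≤ ε for some ε ≥ 0, then ‖z − z₀‖ ≤ ε / ((1 − k) · λ_min(A₀)), where λ_min(A₀) denotes the smallest eigenvalue of A₀. -/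

import Mathlib

open Matrix

private lemma eig_min_mul_norm_le {d : ℕ} {A : Matrix (Fin d) (Fin d) ℝ}
    (hA : A.IsHermitian) (x : EuclideanSpace ℝ (Fin d)) :
    (⨅ i, hA.eigenvalues i) * ‖x‖ ≤ ‖Matrix.toEuclideanCLM (𝕜 := ℝ) A x‖ := by
  set μ := ⨅ i, hA.eigenvalues i with hμ
  rcases le_or_gt μ 0 with hμ0 | hμ0
  · exact le_trans (mul_nonpos_of_nonpos_of_nonneg hμ0 (norm_nonneg _)) (norm_nonneg _)
  · set b := hA.eigenvectorBasis with hb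
    have hrepr : ∀ i, b.repr (Matrix.toEuclideanCLM (𝕜 := ℝ) A x) i
        = hA.eigenvalues i * b.repr x i := by
      intro i
      have hsymm : (Matrix.toEuclideanLin A).IsSymmetric :=
        (Matrix.isHermitian_iff_isSymmetric).1 hA
      have hbi : Matrix.toEuclideanLin A (b i) = hA.eigenvalues i • b i := by
        apply (WithLp.equiv 2 (Fin d → ℝ)).injective
        simp only [WithLp.equiv_apply, Matrix.ofLp_toEuclideanLin_apply]
        have := hA.mulVec_eigenvectorBasis i
        simpa using this
      have hCLM : Matrix.toEuclideanCLM (𝕜 := ℝ) A x = Matrix.toEuclideanLin A x := rfl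
      rw [hCLM, b.repr_apply_apply, b.repr_apply_apply]
      calc inner ℝ (b i) (Matrix.toEuclideanLin A x)
          = inner ℝ (Matrix.toEuclideanLin A (b i)) x := (hsymm (b i) x).symm
        _ = inner ℝ ((hA.eigenvalues i : ℝ) • b i) x := by rw [hbi]
        _ = hA.eigenvalues i * inner ℝ (b i) x := real_inner_smul_left _ _ _
    have hnorm_sq : ∀ y : EuclideanSpace ℝ (Fin d), ‖y‖ ^ 2 = ∑ i, (b.repr y i) ^ 2 := by
      intro y
      rw [← b.repr.norm_map y]
      rw [EuclideanSpace.norm_eq, Real.sq_sqrt (by positivity)]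
      congr 1; ext i; rw [Real.norm_eq_abs, sq_abs]
    have hle : (μ * ‖x‖) ^ 2 ≤ ‖Matrix.toEuclideanCLM (𝕜 := ℝ) A x‖ ^ 2 := by
      rw [mul_pow, hnorm_sq, hnorm_sq, Finset.mul_sum]
      apply Finset.sum_le_sum
      intro i _
      rw [hrepr i, mul_pow]
      have h1 : μ ≤ hA.eigenvalues i :=
        ciInf_le (Finite.bddBelow_range _) i
      have h2 : μ ^ 2 ≤ (hA.eigenvalues i) ^ 2 := by nlinarith
      nlinarith [sq_nonneg (b.repr x i)]
    nlinarith [norm_nonneg (Matrix.toEuclideanCLM (𝕜 := ℝ) A x), norm_nonneg x,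
      mul_nonneg hμ0.le (norm_nonneg x), hle]

set_option maxHeartbeats 1000000 in
/-- **Theorem 1 (gradient-bridged relaxation bound).**
If `h` is twice continuously differentiable with `∇h(z₀) = 0` and symmetric positive
definite Hessian `A₀ = ∇²h(z₀)`, and `‖I − A₀⁻¹ ∇²h(z')‖_op ≤ k < 1` along the segment
from `z₀` to `z`, then `‖∇h(z)‖ ≤ ε` implies `‖z − z₀‖ ≤ ε / ((1 − k) λ_min(A₀))`. -/
theorem gradient_norm_controls_distance
    {d : ℕ} (hd : 0 < d)
    (h : EuclideanSpace ℝ (Fin d) → ℝ)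
    (hsmooth : ContDiff ℝ 2 h)
    (Hess : EuclideanSpace ℝ (Fin d) → Matrix (Fin d) (Fin d) ℝ)
    (hHess : ∀ w, HasFDerivAt (gradient h) (Matrix.toEuclideanCLM (𝕜 := ℝ) (Hess w)) w)
    (z₀ z : EuclideanSpace ℝ (Fin d))
    (hcrit : gradient h z₀ = 0)
    (hposdef : (Hess z₀).PosDef)
    (hsymm : (Hess z₀).IsSymm)
    (k : ℝ) (hk0 : 0 ≤ k) (hk1 : k < 1)
    (hseg : ∀ z' ∈ segment ℝ z₀ z,
      ‖(Matrix.toEuclideanCLM (𝕜 := ℝ) (1 - (Hess z₀)⁻¹ * Hess z') :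
        EuclideanSpace ℝ (Fin d) →L[ℝ] EuclideanSpace ℝ (Fin d))‖ ≤ k)
    (ε : ℝ) (hε : 0 ≤ ε) (hgrad : ‖gradient h z‖ ≤ ε) :
    ‖z - z₀‖ ≤ ε / ((1 - k) * ⨅ i, hposdef.isHermitian.eigenvalues i) := by
  haveI : Nonempty (Fin d) := ⟨⟨0, hd⟩⟩
  set A := Hess z₀ with hA
  set μ := ⨅ i, hposdef.isHermitian.eigenvalues i with hμdef
  -- μ > 0
  have hμpos : 0 < μ := by
    obtain ⟨i₀⟩ := ‹Nonempty (Fin d)›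
    have hbound : ∀ j, hposdef.isHermitian.eigenvalues i₀ ⊓
        (⨅ i, hposdef.isHermitian.eigenvalues i) ≤ hposdef.isHermitian.eigenvalues j := by
      intro j
      exact le_trans inf_le_right (ciInf_le (Finite.bddBelow_range _) j)
    have h1 : (0:ℝ) < hposdef.isHermitian.eigenvalues i₀ := hposdef.eigenvalues_pos i₀
    have h2 : ∀ j, (0:ℝ) < hposdef.isHermitian.eigenvalues j := hposdef.eigenvalues_pos
    -- infimum over finite set is attained
    obtain ⟨j₀, -, hj₀⟩ := Finset.exists_min_image Finset.univ
      hposdef.isHermitian.eigenvalues ⟨i₀, Finset.mem_univ i₀⟩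
    have : hposdef.isHermitian.eigenvalues j₀ ≤ μ :=
      le_ciInf fun j => hj₀ j (Finset.mem_univ j)
    exact lt_of_lt_of_le (h2 j₀) this
  -- invertibility facts
  have hdet : IsUnit A.det := isUnit_iff_ne_zero.2 (ne_of_gt hposdef.det_pos)
  have hAinvA : A * A⁻¹ = 1 := Matrix.mul_nonsing_inv A hdet
  -- the auxiliary map φ
  set B := A⁻¹ with hB
  set φ : EuclideanSpace ℝ (Fin d) → EuclideanSpace ℝ (Fin d) :=
    fun w => w - Matrix.toEuclideanCLM (𝕜 := ℝ) B (gradient h w) with hφ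
  have hderiv : ∀ w, HasFDerivAt φ
      (Matrix.toEuclideanCLM (𝕜 := ℝ) (1 - B * Hess w)) w := by
    intro w
    have h1 : HasFDerivAt (fun x => Matrix.toEuclideanCLM (𝕜 := ℝ) B (gradient h x))
        ((Matrix.toEuclideanCLM (𝕜 := ℝ) B).comp (Matrix.toEuclideanCLM (𝕜 := ℝ) (Hess w))) w :=
      (Matrix.toEuclideanCLM (𝕜 := ℝ) B).hasFDerivAt.comp w (hHess w)
    have h2 := (hasFDerivAt_id w).sub h1
    have heq : Matrix.toEuclideanCLM (𝕜 := ℝ) (1 - B * Hess w)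
        = ContinuousLinearMap.id ℝ (EuclideanSpace ℝ (Fin d))
          - (Matrix.toEuclideanCLM (𝕜 := ℝ) B).comp (Matrix.toEuclideanCLM (𝕜 := ℝ) (Hess w)) := by
      rw [map_sub, _root_.map_one, _root_.map_mul]
      rfl
    rw [heq]
    exact h2
  -- mean value inequality on the segment
  have hconv : Convex ℝ (segment ℝ z₀ z) := convex_segment z₀ z
  have hmvt : ‖φ z - φ z₀‖ ≤ k * ‖z - z₀‖ := by
    apply Convex.norm_image_sub_le_of_norm_hasFDerivWithin_le
      (fun w hw => (hderiv w).hasFDerivWithinAt)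
      (fun w hw => hseg w hw) hconv (left_mem_segment ℝ z₀ z) (right_mem_segment ℝ z₀ z)
  have hφz₀ : φ z₀ = z₀ := by simp [hφ, hcrit]
  have hφz : φ z = z - Matrix.toEuclideanCLM (𝕜 := ℝ) B (gradient h z) := rfl
  set g := gradient h z with hg
  set v := Matrix.toEuclideanCLM (𝕜 := ℝ) B g with hv
  have hmvt' : ‖z - z₀ - v‖ ≤ k * ‖z - z₀‖ := by
    rw [hφz, hφz₀] at hmvt
    have : z - Matrix.toEuclideanCLM (𝕜 := ℝ) B g - z₀ = z - z₀ - v := by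
      rw [hv]; abel
    rwa [this] at hmvt
  have htri : ‖z - z₀‖ - ‖v‖ ≤ ‖z - z₀ - v‖ := by
    have := norm_sub_norm_le (z - z₀) v
    linarith [this]
  have hkey : (1 - k) * ‖z - z₀‖ ≤ ‖v‖ := by nlinarith
  -- bound ‖v‖ : μ * ‖v‖ ≤ ‖A v‖ = ‖g‖ ≤ ε
  have hAv : Matrix.toEuclideanCLM (𝕜 := ℝ) A v = g := by
    rw [hv, ← ContinuousLinearMap.comp_apply, ← ContinuousLinearMap.mul_def, ← _root_.map_mul, hAinvA, _root_.map_one]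
    rfl
  have hμv : μ * ‖v‖ ≤ ε := by
    have := eig_min_mul_norm_le hposdef.isHermitian v
    rw [hAv] at this
    exact le_trans this hgrad
  -- combine
  have h1k : 0 < 1 - k := by linarith
  have hden : 0 < (1 - k) * μ := mul_pos h1k hμpos
  rw [le_div_iff₀ hden]
  nlinarith [norm_nonneg v, norm_nonneg (z - z₀), hμpos, hkey, hμv]
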